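/- Let H be a graph with vertex set A ∪ B, A and B disjoint cliques, |A| = m, |B| = n, and every vertex having at most d non-neighbors. Form the graph 𝐆 as the union over all colorings c : B → [m+n−1] of disjoint copies H(c) of H sharing the common set B (copies A(c) pairwise disjoint). Define lists L(b) = [m+n−1] for b ∈ B, and L(a) = [m+n−1] \ {c(b) : b ∈ B, ab ∉ E(H(c))} for a ∈ A(c). Then every list has size at least m+n−1−d, and 𝐆 admits no L-coloring; consequently χ_ℓ(𝐆) ≥ m + n − d. -/

import Mathlib

def Choosable {V : Type*} (G : SimpleGraph V) (k : ℕ) : Prop :=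
  ∀ L : V → Finset ℕ, (∀ v, k ≤ (L v).card) →
    ∃ c : V → ℕ, (∀ v, c v ∈ L v) ∧ ∀ u v, G.Adj u v → c u ≠ c v

/-- The graph `𝐆` obtained by gluing, over all colorings `c : B → Fin K`, disjoint
copies `H(c)` (with `A`-side `{c} × A`) of a graph `H` on `A ⊕ B` along the common
set `B`. -/
def GlueGraph {A B : Type*} (H : SimpleGraph (A ⊕ B)) (K : ℕ) :
    SimpleGraph ((B → Fin K) × A ⊕ B) where
  Adj u v :=
    (match u, v with
      | .inl p, .inl q => p.1 = q.1
      | _, _ => True) ∧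
    H.Adj (Sum.elim (fun p => Sum.inl p.2) Sum.inr u)
          (Sum.elim (fun p => Sum.inl p.2) Sum.inr v)
  symm := by
    constructor
    rintro (⟨c, a⟩ | b) (⟨c', a'⟩ | b') ⟨h1, h2⟩ <;>
      exact ⟨by simp_all, h2.symm⟩
  loopless := by
    constructor
    rintro (⟨c, a⟩ | b) ⟨h1, h2⟩ <;> exact H.loopless.irrefl _ h2

/-- The list assignment of the construction and its properties: every list has
size at least `m + n - 1 - d`, `𝐆` admits no coloring from these lists, and
consequently `χ_ℓ(𝐆) ≥ m + n - d`, i.e. `𝐆` is not `(m+n-1-d)`-choosable. -/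
theorem stmt13 {A B : Type*} [Fintype A] [Fintype B] [DecidableEq A] [DecidableEq B]
    (m n d : ℕ) (hm : 0 < m) (hn : 0 < n)
    (hA : Fintype.card A = m) (hB : Fintype.card B = n)
    (H : SimpleGraph (A ⊕ B)) [DecidableRel H.Adj]
    (hcliqueA : ∀ a a' : A, a ≠ a' → H.Adj (Sum.inl a) (Sum.inl a'))
    (hcliqueB : ∀ b b' : B, b ≠ b' → H.Adj (Sum.inr b) (Sum.inr b'))
    (hd : ∀ v : A ⊕ B,
      (Finset.univ.filter fun u => u ≠ v ∧ ¬ H.Adj v u).card ≤ d)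
    (L : (B → Fin (m + n - 1)) × A ⊕ B → Finset (Fin (m + n - 1)))
    (hLB : ∀ b : B, L (Sum.inr b) = Finset.univ)
    (hLA : ∀ (c : B → Fin (m + n - 1)) (a : A),
      L (Sum.inl (c, a)) =
        Finset.univ.filter fun col =>
          ∀ b : B, ¬ H.Adj (Sum.inl a) (Sum.inr b) → c b ≠ col) :
    (∀ v, m + n - 1 - d ≤ (L v).card) ∧
    (¬ ∃ col : (B → Fin (m + n - 1)) × A ⊕ B → Fin (m + n - 1),
        (∀ v, col v ∈ L v) ∧
        ∀ u v, (GlueGraph H (m + n - 1)).Adj u v → col u ≠ col v) ∧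
    ¬ Choosable (GlueGraph H (m + n - 1)) (m + n - 1 - d) := by
  have hK : Fintype.card (Fin (m + n - 1)) = m + n - 1 := Fintype.card_fin _
  have h1 : ∀ v, m + n - 1 - d ≤ (L v).card := by
    rintro (⟨c, a⟩ | b)
    · rw [hLA]
      have hsplit := Finset.card_filter_add_card_filter_not
        (s := (Finset.univ : Finset (Fin (m + n - 1))))
        (p := fun col => ∀ b : B, ¬ H.Adj (Sum.inl a) (Sum.inr b) → c b ≠ col)
      have hneg : (Finset.univ.filter fun col : Fin (m + n - 1) =>
          ¬ ∀ b : B, ¬ H.Adj (Sum.inl a) (Sum.inr b) → c b ≠ col).card ≤ d := by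
        have hsub : (Finset.univ.filter fun col : Fin (m + n - 1) =>
            ¬ ∀ b : B, ¬ H.Adj (Sum.inl a) (Sum.inr b) → c b ≠ col) ⊆
            (Finset.univ.filter fun b : B => ¬ H.Adj (Sum.inl a) (Sum.inr b)).image c := by
          intro col hcol
          simp only [Finset.mem_filter, Finset.mem_univ, true_and] at hcol
          push_neg at hcol
          obtain ⟨b, hb, hcb⟩ := hcol
          exact Finset.mem_image.mpr ⟨b, Finset.mem_filter.mpr ⟨Finset.mem_univ _, hb⟩, hcb⟩
        have hBd : (Finset.univ.filter fun b : B => ¬ H.Adj (Sum.inl a) (Sum.inr b)).card ≤ d := by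
          refine le_trans (Finset.card_le_card_of_injOn Sum.inr ?_ ?_) (hd (Sum.inl a))
          · intro b hb
            simp only [Finset.coe_filter, Finset.mem_coe, Finset.mem_filter, Finset.mem_univ, true_and, Set.mem_setOf_eq] at hb ⊢
            exact ⟨by simp, hb⟩
          · intro x _ y _ h; exact Sum.inr_injective h
        exact le_trans (Finset.card_le_card hsub) (le_trans Finset.card_image_le hBd)
      rw [Finset.card_univ, hK] at hsplit
      omega
    · rw [hLB, Finset.card_univ, hK]; omega
  have h2 : ¬ ∃ col : (B → Fin (m + n - 1)) × A ⊕ B → Fin (m + n - 1),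
      (∀ v, col v ∈ L v) ∧
      ∀ u v, (GlueGraph H (m + n - 1)).Adj u v → col u ≠ col v := by
    rintro ⟨col, hmem, hprop⟩
    set c : B → Fin (m + n - 1) := fun b => col (Sum.inr b) with hc
    have hf : Function.Injective
        (Sum.elim (fun a : A => col (Sum.inl (c, a))) (fun b : B => col (Sum.inr b))) := by
      rintro (a | b) (a' | b') h <;> simp only [Sum.elim_inl, Sum.elim_inr] at h
      · by_contra hne
        have hne' : a ≠ a' := fun e => hne (congrArg _ e)
        exact hprop (Sum.inl (c, a)) (Sum.inl (c, a')) ⟨rfl, hcliqueA a a' hne'⟩ h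
      · by_cases hadj : H.Adj (Sum.inl a) (Sum.inr b')
        · exact absurd h (hprop _ _ ⟨trivial, hadj⟩)
        · have hm' := hmem (Sum.inl (c, a))
          rw [hLA] at hm'
          simp only [Finset.mem_filter, Finset.mem_univ, true_and] at hm'
          exact absurd h.symm (hm' b' hadj)
      · by_cases hadj : H.Adj (Sum.inl a') (Sum.inr b)
        · exact absurd h.symm (hprop _ _ ⟨trivial, hadj⟩)
        · have hm' := hmem (Sum.inl (c, a'))
          rw [hLA] at hm'
          simp only [Finset.mem_filter, Finset.mem_univ, true_and] at hm'
          exact absurd h (hm' b hadj)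
      · by_contra hne
        have hne' : b ≠ b' := fun e => hne (congrArg _ e)
        exact hprop (Sum.inr b) (Sum.inr b') ⟨trivial, hcliqueB b b' hne'⟩ h
    have hcard := Fintype.card_le_of_injective _ hf
    rw [hK, Fintype.card_sum, hA, hB] at hcard
    omega
  refine ⟨h1, h2, fun hch => ?_⟩
  obtain ⟨col, hmem, hprop⟩ := hch (fun v => (L v).image Fin.val) (fun v => by
    rw [Finset.card_image_of_injective _ Fin.val_injective]; exact h1 v)
  apply h2
  have hlt : ∀ v, col v < m + n - 1 := by
    intro v
    obtain ⟨x, _, hx⟩ := Finset.mem_image.mp (hmem v)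
    exact hx ▸ x.isLt
  refine ⟨fun v => ⟨col v, hlt v⟩, fun v => ?_, fun u v h hne => hprop u v h (congrArg Fin.val hne)⟩
  obtain ⟨x, hx, hxv⟩ := Finset.mem_image.mp (hmem v)
  show (⟨col v, hlt v⟩ : Fin (m + n - 1)) ∈ L v
  rw [show (⟨col v, hlt v⟩ : Fin (m + n - 1)) = x from Fin.ext hxv.symm]
  exact hx
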